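/- Let f be L-smooth convex with minimizer x_⋆ and x₀ ∈ ℝ^d. Suppose z is an auxiliary vector for x with pre-rate τ > 0. Let δ = (1+√(1+4τ))/2, τ' = τ + δ, x' = (τ/τ')x⁺ + (δ/τ')z, and z' = z − (δ/L)∇f(x'). Then f(x') − f(x_⋆) + (L/(2τ'))‖z'−x_⋆‖² ≤ (L/(2τ'))‖x₀−x_⋆‖²; in particular f(x') − f(x_⋆) ≤ (L/(2τ'))‖x₀−x_⋆‖². -/

import Mathlib

open InnerProductSpace Set

variable {F : Type*} [NormedAddCommGroup F] [InnerProductSpace ℝ F] [CompleteSpace F]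

local notation "⟪" x ", " y "⟫" => @inner ℝ _ _ x y

lemma line_hasDerivAt (f : F → ℝ) (f' : F → F) (hdiff : ∀ y, HasGradientAt f (f' y) y)
    (a v : F) (t : ℝ) :
    HasDerivAt (fun s : ℝ => f (a + s • v)) ⟪f' (a + t • v), v⟫ t := by
  have h1 : HasDerivAt (fun s : ℝ => a + s • v) v t := by
    simpa using ((hasDerivAt_id t).smul_const v).const_add a
  have h2 := (hdiff (a + t • v)).hasFDerivAt.comp_hasDerivAt t h1
  simp [InnerProductSpace.toDual_apply_apply] at h2
  exact h2

lemma grad_lb (f : F → ℝ) (f' : F → F) (hconv : ConvexOn ℝ Set.univ f)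
    (hdiff : ∀ y, HasGradientAt f (f' y) y) (a w : F) :
    f a + ⟪f' a, w - a⟫ ≤ f w := by
  set g : ℝ → ℝ := fun t => f (a + t • (w - a)) with hg
  have hgc : ConvexOn ℝ Set.univ g := by
    have := hconv.comp_affineMap (AffineMap.lineMap a w)
    have heq : (f ∘ (AffineMap.lineMap a w : ℝ →ᵃ[ℝ] F)) = g := by
      funext t
      simp [g, AffineMap.lineMap_apply, add_comm]
    rw [heq] at this
    simpa using this
  have hd := line_hasDerivAt f f' hdiff a (w - a) 0
  have := hgc.le_slope_of_hasDerivWithinAt (mem_univ (0:ℝ)) (mem_univ (1:ℝ)) one_pos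
    hd.hasDerivWithinAt
  rw [slope_def_field] at this
  simp only [g] at this ⊢
  have h0 : a + (0:ℝ) • (w - a) = a := by simp
  have h1 : a + (1:ℝ) • (w - a) = w := by simp
  rw [h0, h1] at this
  simp at this
  linarith

lemma descent (L : ℝ) (hL : 0 < L) (f : F → ℝ) (f' : F → F)
    (hdiff : ∀ y, HasGradientAt f (f' y) y)
    (hsmooth : ∀ y w, ‖f' y - f' w‖ ≤ L * ‖y - w‖) (a v : F) :
    f (a + v) ≤ f a + ⟪f' a, v⟫ + L / 2 * ‖v‖ ^ 2 := by
  set h : ℝ → ℝ := fun t => f (a + t • v) - t * ⟪f' a, v⟫ - L / 2 * t ^ 2 * ‖v‖ ^ 2 with hh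
  have hd : ∀ t : ℝ, HasDerivAt h (⟪f' (a + t • v), v⟫ - ⟪f' a, v⟫ - L * t * ‖v‖ ^ 2) t := by
    intro t
    have h1 := line_hasDerivAt f f' hdiff a v t
    have h2 : HasDerivAt (fun t : ℝ => t * ⟪f' a, v⟫) ⟪f' a, v⟫ t := by
      simpa using (hasDerivAt_id t).mul_const (⟪f' a, v⟫)
    have h3 : HasDerivAt (fun t : ℝ => L / 2 * t ^ 2 * ‖v‖ ^ 2) (L * t * ‖v‖ ^ 2) t := by
      have := ((hasDerivAt_pow 2 t).const_mul (L / 2)).mul_const (‖v‖ ^ 2)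
      refine this.congr_deriv ?_
      rw [show (2:ℕ) - 1 = 1 from rfl]
      push_cast
      ring
    exact (h1.sub h2).sub h3
  have hanti : AntitoneOn h (Icc (0:ℝ) 1) := by
    apply antitoneOn_of_deriv_nonpos (convex_Icc 0 1)
    · exact fun t _ => (hd t).continuousAt.continuousWithinAt
    · exact fun t _ => ((hd t).differentiableAt).differentiableWithinAt
    · intro t ht
      rw [interior_Icc] at ht
      rw [(hd t).deriv]
      have hcs : ⟪f' (a + t • v) - f' a, v⟫ ≤ ‖f' (a + t • v) - f' a‖ * ‖v‖ :=
        real_inner_le_norm _ _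
      have hsm : ‖f' (a + t • v) - f' a‖ ≤ L * (t * ‖v‖) := by
        have := hsmooth (a + t • v) a
        simpa [norm_smul, abs_of_pos ht.1] using this
      have hv : (0:ℝ) ≤ ‖v‖ := norm_nonneg v
      have : ⟪f' (a + t • v) - f' a, v⟫ ≤ L * (t * ‖v‖) * ‖v‖ := by
        calc ⟪f' (a + t • v) - f' a, v⟫ ≤ ‖f' (a + t • v) - f' a‖ * ‖v‖ := hcs
          _ ≤ L * (t * ‖v‖) * ‖v‖ := by
              apply mul_le_mul_of_nonneg_right hsm hv
      rw [inner_sub_left] at this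
      nlinarith [this]
  have h10 : h 1 ≤ h 0 := hanti (by norm_num) (by norm_num) (by norm_num)
  simp only [h, one_smul, zero_smul, add_zero] at h10
  nlinarith [h10]

lemma grad_inner (c : F) (w : F) : HasGradientAt (fun y : F => ⟪c, y⟫) c w := by
  rw [hasGradientAt_iff_hasFDerivAt]
  have heq : (fun y : F => ⟪c, y⟫) = ⇑((InnerProductSpace.toDual ℝ F) c) := by
    funext y
    simp [InnerProductSpace.toDual_apply_apply]
  rw [heq]
  exact ((InnerProductSpace.toDual ℝ F) c).hasFDerivAt

lemma coco (L : ℝ) (hL : 0 < L) (f : F → ℝ) (f' : F → F)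
    (hconv : ConvexOn ℝ Set.univ f)
    (hdiff : ∀ y, HasGradientAt f (f' y) y)
    (hsmooth : ∀ y w, ‖f' y - f' w‖ ≤ L * ‖y - w‖) (u y : F) :
    f y + ⟪f' y, u - y⟫ + 1 / (2 * L) * ‖f' u - f' y‖ ^ 2 ≤ f u := by
  set φ : F → ℝ := fun w => f w - ⟪f' y, w⟫ with hφ
  set φ' : F → F := fun w => f' w - f' y with hφ'
  have hdφ : ∀ w, HasGradientAt φ (φ' w) w := by
    intro w
    rw [hasGradientAt_iff_hasFDerivAt] at *
    have h1 := (hdiff w).hasFDerivAt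
    have h2 := grad_inner (f' y) w
    rw [hasGradientAt_iff_hasFDerivAt] at h2
    have := h1.sub h2
    simp only [φ, φ', map_sub]
    exact this
  have hsφ : ∀ a b, ‖φ' a - φ' b‖ ≤ L * ‖a - b‖ := by
    intro a b
    simpa [φ', sub_sub_sub_cancel_right] using hsmooth a b
  set w := f' u - f' y with hw
  set v := -((1 / L) • w) with hv
  have hdes := descent L hL φ φ' hdφ hsφ u v
  have hlb := grad_lb f f' hconv hdiff y (u + v)
  -- φ y ≤ φ (u + v)
  have hφlb : φ y ≤ φ (u + v) := by
    simp only [φ]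
    rw [inner_sub_right] at hlb
    linarith
  have hiv : ⟪φ' u, v⟫ = -(1 / L) * ‖w‖ ^ 2 := by
    simp only [φ', v, ← hw, inner_neg_right, real_inner_smul_right,
      real_inner_self_eq_norm_sq]
    ring
  have hnv : ‖v‖ ^ 2 = (1 / L) ^ 2 * ‖w‖ ^ 2 := by
    simp only [v, norm_neg, norm_smul, Real.norm_eq_abs, mul_pow, sq_abs]
  rw [hiv, hnv] at hdes
  have hL' : L ≠ 0 := ne_of_gt hL
  clear_value φ φ' w v
  have key : φ y ≤ φ u - 1 / (2 * L) * ‖w‖ ^ 2 := by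
    have harith : -(1 / L) * ‖w‖ ^ 2 + L / 2 * ((1 / L) ^ 2 * ‖w‖ ^ 2)
        = -(1 / (2 * L)) * ‖w‖ ^ 2 := by
      field_simp
      try ring
    have h2 : φ (u + v) ≤ φ u + -(1 / (2 * L)) * ‖w‖ ^ 2 := by
      rw [← harith]; linarith
    linarith
  simp only [hφ] at key
  rw [inner_sub_right]
  linarith

lemma cocoP (L : ℝ) (hL : 0 < L) (f : F → ℝ) (f' : F → F)
    (hconv : ConvexOn ℝ Set.univ f)
    (hdiff : ∀ y, HasGradientAt f (f' y) y)
    (hsmooth : ∀ y w, ‖f' y - f' w‖ ≤ L * ‖y - w‖) (u y : F) :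
    2 * L * f y + 2 * L * ⟪f' y, u - y⟫ + ‖f' u - f' y‖ ^ 2 ≤ 2 * L * f u := by
  have hc := coco L hL f f' hconv hdiff hsmooth u y
  have h2 := mul_le_mul_of_nonneg_left hc (by positivity : (0:ℝ) ≤ 2 * L)
  have hcan : 2 * L * (1 / (2 * L) * ‖f' u - f' y‖ ^ 2) = ‖f' u - f' y‖ ^ 2 := by
    field_simp
  linarith [h2, hcan]

theorem ogm_induction_rate {d : ℕ} (L : ℝ) (hL : 0 < L)
    (f : EuclideanSpace ℝ (Fin d) → ℝ)
    (f' : EuclideanSpace ℝ (Fin d) → EuclideanSpace ℝ (Fin d))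
    (hconv : ConvexOn ℝ Set.univ f)
    (hdiff : ∀ y, HasGradientAt f (f' y) y)
    (hsmooth : ∀ y w, ‖f' y - f' w‖ ≤ L * ‖y - w‖)
    (xstar : EuclideanSpace ℝ (Fin d)) (hmin : ∀ y, f xstar ≤ f y)
    (x₀ x z : EuclideanSpace ℝ (Fin d)) (τ : ℝ) (hτ : 0 < τ)
    (haux : (f x - (1 / (2 * L)) * ‖f' x‖ ^ 2) - f xstar
              + L / (2 * τ) * ‖z - xstar‖ ^ 2 ≤ L / (2 * τ) * ‖x₀ - xstar‖ ^ 2)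
    (δ τ' : ℝ) (hδ : δ = (1 + Real.sqrt (1 + 4 * τ)) / 2) (hτ' : τ' = τ + δ)
    (x' z' : EuclideanSpace ℝ (Fin d))
    (hx' : x' = (τ / τ') • (x - (1 / L) • f' x) + (δ / τ') • z)
    (hz' : z' = z - (δ / L) • f' x') :
    (f x' - f xstar + L / (2 * τ') * ‖z' - xstar‖ ^ 2
        ≤ L / (2 * τ') * ‖x₀ - xstar‖ ^ 2) ∧
      f x' - f xstar ≤ L / (2 * τ') * ‖x₀ - xstar‖ ^ 2 := by
  -- basic scalar facts
  have hsq : Real.sqrt (1 + 4 * τ) ^ 2 = 1 + 4 * τ := Real.sq_sqrt (by linarith)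
  have hs1 : (1:ℝ) ≤ Real.sqrt (1 + 4 * τ) := by
    nlinarith [Real.sqrt_nonneg (1 + 4 * τ), hsq]
  have hδpos : 0 < δ := by rw [hδ]; linarith
  have hδ2 : δ ^ 2 = τ + δ := by
    rw [hδ]
    linear_combination hsq / 4
  subst hτ'
  have hτ'pos : 0 < τ + δ := by linarith
  have hLne : L ≠ 0 := ne_of_gt hL
  have hτ'ne : τ + δ ≠ 0 := ne_of_gt hτ'pos
  have hτne : τ ≠ 0 := ne_of_gt hτ
  have hδne : δ ≠ 0 := ne_of_gt hδpos
  -- gradient at minimizer is zero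
  have hgradstar : f' xstar = 0 := by
    have hloc : IsLocalMin f xstar := Filter.Eventually.of_forall hmin
    have h0 := hloc.hasFDerivAt_eq_zero (hdiff xstar).hasFDerivAt
    have := congrArg (InnerProductSpace.toDual ℝ (EuclideanSpace ℝ (Fin d))).symm h0
    simpa using this
  -- abbreviations
  set xp : EuclideanSpace ℝ (Fin d) := x - (1 / L) • f' x with hxp
  -- F1 : cocoercivity at (xstar, x')
  have hF1 : 2 * L * (f x' - f xstar) + ‖f' x'‖ ^ 2 ≤ 2 * L * ⟪f' x', x' - xstar⟫ := by
    have hA := cocoP L hL f f' hconv hdiff hsmooth xstar x'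
    rw [hgradstar] at hA
    rw [show (0 : EuclideanSpace ℝ (Fin d)) - f' x' = -(f' x') by abel] at hA
    rw [norm_neg] at hA
    rw [show xstar - x' = -(x' - xstar) by abel, inner_neg_right] at hA
    linarith
  -- F2 : cocoercivity at (x, x')
  have hF2 : 2 * L * ((f x' - f xstar) - ((f x - 1 / (2 * L) * ‖f' x‖ ^ 2) - f xstar))
      + ‖f' x'‖ ^ 2 ≤ 2 * L * ⟪f' x', x' - xp⟫ := by
    have hB := cocoP L hL f f' hconv hdiff hsmooth x x'
    have hnorm : ‖f' x - f' x'‖ ^ 2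
        = ‖f' x‖ ^ 2 - 2 * ⟪f' x, f' x'⟫ + ‖f' x'‖ ^ 2 := by
      rw [@norm_sub_sq_real]
    have hv2 : x' - xp = (x' - x) + (1 / L) • f' x := by
      rw [hxp]; module
    have hip : ⟪f' x', x' - xp⟫ = ⟪f' x', x' - x⟫ + 1 / L * ⟪f' x, f' x'⟫ := by
      rw [hv2, inner_add_right, real_inner_smul_right, real_inner_comm (f' x') (f' x)]
    rw [show x - x' = -(x' - x) by abel, inner_neg_right] at hB
    rw [hip]
    have hcan1 : 2 * L * (1 / L * ⟪f' x, f' x'⟫) = 2 * ⟪f' x, f' x'⟫ := by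
      field_simp
      try ring
    have hcan2 : 2 * L * (1 / (2 * L) * ‖f' x‖ ^ 2) = ‖f' x‖ ^ 2 := by
      field_simp
      try ring
    linarith [hB, hnorm, hcan1, hcan2]
  -- aux hypothesis in polynomial form
  have hauxP : 2 * τ * ((f x - 1 / (2 * L) * ‖f' x‖ ^ 2) - f xstar)
      + L * ‖z - xstar‖ ^ 2 ≤ L * ‖x₀ - xstar‖ ^ 2 := by
    have h := mul_le_mul_of_nonneg_left haux (by positivity : (0:ℝ) ≤ 2 * τ)
    have hcan3 : 2 * τ * (L / (2 * τ) * ‖z - xstar‖ ^ 2) = L * ‖z - xstar‖ ^ 2 := by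
      field_simp
      try ring
    have hcan4 : 2 * τ * (L / (2 * τ) * ‖x₀ - xstar‖ ^ 2) = L * ‖x₀ - xstar‖ ^ 2 := by
      field_simp
      try ring
    linarith [h, hcan3, hcan4]
  -- vector identity
  have e1 : (τ + δ) * (τ / (τ + δ)) = τ := by field_simp
  have e2 : (τ + δ) * (δ / (τ + δ)) = δ := by field_simp
  have hsum : (τ + δ) • x' = τ • xp + δ • z := by
    rw [hx', smul_add, smul_smul, smul_smul, e1, e2]
  have hvec : δ • (z - x') = τ • (x' - xp) := by
    have h2 : τ • xp + δ • z - (τ + δ) • x' = 0 := by rw [hsum]; abel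
    calc δ • (z - x') = τ • (x' - xp) + (τ • xp + δ • z - (τ + δ) • x') := by module
      _ = τ • (x' - xp) := by rw [h2]; abel
  have hv3 : δ • (z - xstar) = τ • (x' - xp) + δ • (x' - xstar) := by
    calc δ • (z - xstar) = δ • (z - x') + δ • (x' - xstar) := by module
      _ = τ • (x' - xp) + δ • (x' - xstar) := by rw [hvec]
  have hPiden : δ * ⟪f' x', z - xstar⟫
      = τ * ⟪f' x', x' - xp⟫ + δ * ⟪f' x', x' - xstar⟫ := by
    have h1 : ⟪f' x', δ • (z - xstar)⟫
        = ⟪f' x', τ • (x' - xp) + δ • (x' - xstar)⟫ := by rw [hv3]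
    rw [inner_add_right, real_inner_smul_right, real_inner_smul_right,
      real_inner_smul_right] at h1
    exact h1
  -- expansion of ‖z' - xstar‖²
  have hZ' : L ^ 2 * ‖z' - xstar‖ ^ 2
      = L ^ 2 * ‖z - xstar‖ ^ 2 - 2 * δ * L * ⟪f' x', z - xstar⟫
        + (τ + δ) * ‖f' x'‖ ^ 2 := by
    have hzv : z' - xstar = (z - xstar) - (δ / L) • f' x' := by rw [hz']; module
    rw [hzv, @norm_sub_sq_real, real_inner_smul_right,
      real_inner_comm (z - xstar) (f' x'), norm_smul, Real.norm_eq_abs,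
      mul_pow, sq_abs, ← hδ2]
    field_simp
  -- main polynomial inequality
  have hgoal' : 2 * (τ + δ) * L * (f x' - f xstar) + L ^ 2 * ‖z' - xstar‖ ^ 2
      ≤ L ^ 2 * ‖x₀ - xstar‖ ^ 2 := by
    have m1 := mul_le_mul_of_nonneg_left hF2 hτ.le
    have m2 := mul_le_mul_of_nonneg_left hF1 hδpos.le
    have m3 := mul_le_mul_of_nonneg_left hauxP hL.le
    have hP2 : 2 * L * (δ * ⟪f' x', z - xstar⟫)
        = 2 * L * (τ * ⟪f' x', x' - xp⟫ + δ * ⟪f' x', x' - xstar⟫) := by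
      rw [hPiden]
    linarith [m1, m2, m3, hP2, hZ']
  -- conclude
  have hpos : (0:ℝ) < 2 * (τ + δ) * L := by positivity
  have hfin : L / (2 * (τ + δ)) * ‖x₀ - xstar‖ ^ 2
      - (f x' - f xstar + L / (2 * (τ + δ)) * ‖z' - xstar‖ ^ 2)
      = (L ^ 2 * ‖x₀ - xstar‖ ^ 2
          - (2 * (τ + δ) * L * (f x' - f xstar) + L ^ 2 * ‖z' - xstar‖ ^ 2))
        / (2 * (τ + δ) * L) := by
    field_simp
  have hnn : (0:ℝ) ≤ (L ^ 2 * ‖x₀ - xstar‖ ^ 2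
      - (2 * (τ + δ) * L * (f x' - f xstar) + L ^ 2 * ‖z' - xstar‖ ^ 2))
        / (2 * (τ + δ) * L) := div_nonneg (by linarith) hpos.le
  have hconj1 : f x' - f xstar + L / (2 * (τ + δ)) * ‖z' - xstar‖ ^ 2
      ≤ L / (2 * (τ + δ)) * ‖x₀ - xstar‖ ^ 2 := by linarith
  refine ⟨hconj1, ?_⟩
  have : (0:ℝ) ≤ L / (2 * (τ + δ)) * ‖z' - xstar‖ ^ 2 := by positivity
  linarith
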